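/- Let the weight Λ be as in the context. Then for every η with |η| > 1 and every t ≥ 0, 1 ≤ 1/Λ(t,η) ≤ e^{(3π/20) |η|^{1/3}}. -/

import Mathlib

open Real Set

noncomputable section

/-- The weight `Λ` together with its defining properties, as described in the context:
`Λ(t,η) = 1` for `|η| ≤ 1`, `Λ(t,-η) = Λ(t,η)`; and for `η > 1` it is continuous and
nondecreasing in `t`, equal to `1` for `t ≥ 2η`, constant on the initial time interval
`[0, 2η/(2E(η^{2/3})+1)]`, and on each interval `[2η/(2k+1), 2η/(2k-1)]` it solves the
stated ODE (with rate `1/20 · (1+|t-η/k|²)⁻¹` for `1 ≤ k ≤ E(η^{1/3})` and rate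
`1/20 · (η/k³)(1+|t-η/k|²)⁻¹` for `E(η^{1/3}) < k ≤ E(η^{2/3})`). -/
structure LambdaData where
  L : ℝ → ℝ → ℝ
  pos : ∀ t η, 0 < L t η
  one_of_small : ∀ t η, |η| ≤ 1 → L t η = 1
  symm : ∀ t η, L t (-η) = L t η
  mono : ∀ η, 1 < η → Monotone fun t => L t η
  cont : ∀ η, 1 < η → Continuous fun t => L t η
  one_late : ∀ η, 1 < η → ∀ t, 2 * η ≤ t → L t η = 1
  const_init : ∀ η, 1 < η →
    ∀ t ∈ Set.Icc (0 : ℝ) (2 * η / (2 * (⌊η ^ ((2:ℝ)/3)⌋₊ : ℝ) + 1)), L t η = L 0 η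
  ode_low : ∀ η, 1 < η → ∀ k : ℕ, 1 ≤ k → k ≤ ⌊η ^ ((1:ℝ)/3)⌋₊ →
    ∀ t ∈ Set.Icc (2 * η / (2 * (k : ℝ) + 1)) (2 * η / (2 * (k : ℝ) - 1)),
      HasDerivWithinAt (fun τ => L τ η)
        (1 / 20 * (1 + |t - η / (k : ℝ)| ^ 2)⁻¹ * L t η)
        (Set.Icc (2 * η / (2 * (k : ℝ) + 1)) (2 * η / (2 * (k : ℝ) - 1))) t
  ode_high : ∀ η, 1 < η → ∀ k : ℕ, ⌊η ^ ((1:ℝ)/3)⌋₊ < k → k ≤ ⌊η ^ ((2:ℝ)/3)⌋₊ →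
    ∀ t ∈ Set.Icc (2 * η / (2 * (k : ℝ) + 1)) (2 * η / (2 * (k : ℝ) - 1)),
      HasDerivWithinAt (fun τ => L τ η)
        (1 / 20 * (η / (k : ℝ) ^ 3) * (1 + |t - η / (k : ℝ)| ^ 2)⁻¹ * L t η)
        (Set.Icc (2 * η / (2 * (k : ℝ) + 1)) (2 * η / (2 * (k : ℝ) - 1))) t

lemma seg_growth (f : ℝ → ℝ) (a b m c : ℝ) (hab : a ≤ b) (hc : 0 ≤ c)
    (hpos : ∀ t, 0 < f t) (hcont : Continuous f)
    (hder : ∀ t ∈ Icc a b, HasDerivWithinAt f (c * (1 + |t - m| ^ 2)⁻¹ * f t) (Icc a b) t) :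
    f b ≤ f a * Real.exp (c * π) := by
  set g : ℝ → ℝ := fun t => f t * Real.exp (-(c * Real.arctan (t - m))) with hg
  have hgder : ∀ t ∈ Icc a b, HasDerivWithinAt g 0 (Icc a b) t := by
    intro t ht
    have h2 : HasDerivAt (fun t : ℝ => Real.exp (-(c * Real.arctan (t - m))))
        ((-(c * (1 + (t - m) ^ 2)⁻¹)) * Real.exp (-(c * Real.arctan (t - m)))) t := by
      have harc : HasDerivAt (fun t : ℝ => -(c * Real.arctan (t - m)))
          (-(c * (1 + (t - m) ^ 2)⁻¹)) t := by
        have : HasDerivAt (fun t : ℝ => Real.arctan (t - m)) ((1 + (t - m) ^ 2)⁻¹) t := by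
          simpa [Function.comp_def] using ((Real.hasDerivAt_arctan' (t - m)).comp t
            ((hasDerivAt_id t).sub_const m))
        simpa using (this.const_mul c).fun_neg
      simpa [mul_comm] using harc.exp
    have : HasDerivWithinAt g _ (Icc a b) t := (hder t ht).mul (h2.hasDerivWithinAt)
    convert this using 1
    have habs : |t - m| ^ 2 = (t - m) ^ 2 := sq_abs _
    rw [habs]; ring
  have hgc : ∀ x ∈ Icc a b, g x = g a := by
    apply constant_of_has_deriv_right_zero
    · exact (hcont.mul (by continuity)).continuousOn
    · intro x hx
      exact (hgder x (Ico_subset_Icc_self hx)).mono_of_mem_nhdsWithin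
        (Icc_mem_nhdsGE_of_mem hx)
  have hb := hgc b (right_mem_Icc.2 hab)
  have hfb : f b = f a * Real.exp (c * Real.arctan (b - m) - c * Real.arctan (a - m)) := by
    have h1 : f b = g a * Real.exp (c * Real.arctan (b - m)) := by
      rw [← hb]; simp [hg, mul_assoc, ← Real.exp_add]
    rw [h1, hg]
    simp only [mul_assoc, ← Real.exp_add]
    ring_nf
  rw [hfb]
  have harc : c * Real.arctan (b - m) - c * Real.arctan (a - m) ≤ c * π := by
    have h1 := Real.arctan_lt_pi_div_two (b - m)
    have h2 := Real.neg_pi_div_two_lt_arctan (a - m)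
    nlinarith
  exact mul_le_mul_of_nonneg_left (Real.exp_le_exp.2 harc) (hpos a).le

lemma tele_sum (E : ℕ) (hE : 1 ≤ E) : ∀ F : ℕ, E ≤ F →
    ∑ j ∈ Finset.Icc (E + 1) F, (1:ℝ) / (j:ℝ) ^ 3
      ≤ 1 / (2 * E * (E + 1)) - 1 / (2 * F * (F + 1)) := by
  intro F hF
  induction F, hF using Nat.le_induction with
  | base =>
      simp [Finset.Icc_eq_empty_of_lt (Nat.lt_succ_self E)]
  | succ F hEF ih =>
      rw [Finset.sum_Icc_succ_top (by omega : E + 1 ≤ F + 1)]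
      have hF1 : (1:ℝ) ≤ (F:ℝ) := by exact_mod_cast hEF.trans' hE
      have key : (1:ℝ) / ((F:ℝ) + 1) ^ 3
          ≤ 1 / (2 * F * (F + 1)) - 1 / (2 * (F + 1) * ((F + 1) + 1)) := by
        rw [div_sub_div _ _ (by positivity) (by positivity),
          div_le_div_iff₀ (by positivity) (by positivity)]
        nlinarith [sq_nonneg ((F:ℝ) + 1), hF1]
      have ih' := ih
      push_cast
      push_cast at ih' key
      linarith

set_option maxHeartbeats 1000000 in
lemma main_pos (Λ : LambdaData) (η : ℝ) (hη : 1 < η) :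
    1 / Λ.L 0 η ≤ Real.exp (3 * π / 20 * η ^ ((1:ℝ)/3)) := by
  set E := ⌊η ^ ((1:ℝ)/3)⌋₊ with hEdef
  set F := ⌊η ^ ((2:ℝ)/3)⌋₊ with hFdef
  have hη0 : (0:ℝ) < η := lt_trans one_pos hη
  have h13 : (1:ℝ) ≤ η ^ ((1:ℝ)/3) := Real.one_le_rpow hη.le (by norm_num)
  have hE1 : 1 ≤ E := Nat.le_floor (by exact_mod_cast h13)
  have hEF : E ≤ F :=
    Nat.floor_le_floor (Real.rpow_le_rpow_of_exponent_le hη.le (by norm_num))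
  have hEle : (E:ℝ) ≤ η ^ ((1:ℝ)/3) := Nat.floor_le (by positivity)
  have hElt : η ^ ((1:ℝ)/3) < (E:ℝ) + 1 := Nat.lt_floor_add_one _
  have hcube : η = (η ^ ((1:ℝ)/3)) ^ (3:ℕ) := by
    rw [← Real.rpow_natCast (η ^ ((1:ℝ)/3)) 3, ← Real.rpow_mul hη0.le]
    norm_num
  set c : ℕ → ℝ := fun k => if k ≤ E then (1:ℝ)/20 else 1/20 * (η / (k:ℝ)^3) with hcdef
  have hcpos : ∀ k, 0 ≤ c k := by
    intro k
    by_cases h : k ≤ E <;> simp only [hcdef, h, if_true, if_false] <;> positivity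
  have chain : ∀ n : ℕ, n ≤ F →
      Λ.L (2*η) η ≤ Λ.L (2*η/(2*(n:ℝ)+1)) η
        * Real.exp (π * ∑ j ∈ Finset.Icc 1 n, c j) := by
    intro n
    induction n with
    | zero => intro _; norm_num
    | succ n ih =>
      intro hnF
      have ihh := ih (le_trans (Nat.le_succ n) hnF)
      have hk0 : 1 ≤ n + 1 := Nat.le_add_left 1 n
      have hkr : ((n+1 : ℕ) : ℝ) = (n:ℝ) + 1 := by push_cast; ring
      have hseg : Λ.L (2*η/(2*((n+1:ℕ):ℝ)-1)) η
          ≤ Λ.L (2*η/(2*((n+1:ℕ):ℝ)+1)) η * Real.exp (c (n+1) * π) := by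
        have hab : 2*η/(2*((n+1:ℕ):ℝ)+1) ≤ 2*η/(2*((n+1:ℕ):ℝ)-1) := by
          rw [hkr]
          apply div_le_div_of_nonneg_left (by linarith) (by linarith) (by linarith)
        apply seg_growth (fun τ => Λ.L τ η) _ _ (η/((n+1:ℕ):ℝ)) (c (n+1)) hab
          (hcpos _) (fun t => Λ.pos t η) (Λ.cont η hη)
        intro t htmem
        by_cases hkE : n + 1 ≤ E
        · have := Λ.ode_low η hη (n+1) hk0 hkE t htmem
          have hc1 : c (n+1) = 1/20 := by simp [hcdef, hkE]
          rw [hc1]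
          exact this
        · have := Λ.ode_high η hη (n+1) (not_le.mp hkE) hnF t htmem
          have hc1 : c (n+1) = 1/20 * (η / ((n+1:ℕ):ℝ)^3) := by simp [hcdef, hkE]
          rw [hc1]
          exact this
      have hbval : 2*η/(2*((n+1:ℕ):ℝ)-1) = 2*η/(2*(n:ℝ)+1) := by
        rw [hkr]; ring_nf
      rw [hbval] at hseg
      calc Λ.L (2*η) η
          ≤ Λ.L (2*η/(2*(n:ℝ)+1)) η * Real.exp (π * ∑ j ∈ Finset.Icc 1 n, c j) := ihh
        _ ≤ (Λ.L (2*η/(2*((n+1:ℕ):ℝ)+1)) η * Real.exp (c (n+1) * π))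
              * Real.exp (π * ∑ j ∈ Finset.Icc 1 n, c j) :=
            mul_le_mul_of_nonneg_right hseg (Real.exp_pos _).le
        _ = Λ.L (2*η/(2*((n+1:ℕ):ℝ)+1)) η
              * Real.exp (π * ∑ j ∈ Finset.Icc 1 (n+1), c j) := by
            rw [Finset.sum_Icc_succ_top hk0, mul_assoc, ← Real.exp_add]
            ring_nf
  have haF0 : (0:ℝ) ≤ 2*η/(2*(F:ℝ)+1) := by positivity
  have hconst : Λ.L (2*η/(2*(F:ℝ)+1)) η = Λ.L 0 η :=
    Λ.const_init η hη (2*η/(2*(F:ℝ)+1)) ⟨haF0, le_refl _⟩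
  have h2η : Λ.L (2*η) η = 1 := Λ.one_late η hη (2*η) le_rfl
  have hmain := chain F le_rfl
  rw [h2η, hconst] at hmain
  -- Bound the exponent sum
  have hsum : ∑ j ∈ Finset.Icc 1 F, c j ≤ 3/20 * η ^ ((1:ℝ)/3) := by
    have hsplit : ∑ j ∈ Finset.Icc 1 F, c j
        = ∑ j ∈ Finset.Icc 1 E, c j + ∑ j ∈ Finset.Icc (E+1) F, c j := by
      have e1 : Finset.Icc 1 F = Finset.Ioc 0 F := by ext x; simp; omega
      have e2 : Finset.Icc 1 E = Finset.Ioc 0 E := by ext x; simp; omega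
      have e3 : Finset.Icc (E+1) F = Finset.Ioc E F := by ext x; simp
      rw [e1, e2, e3]
      exact (Finset.sum_Ioc_consecutive c (Nat.zero_le E) hEF).symm
    have h1 : ∑ j ∈ Finset.Icc 1 E, c j = (E:ℝ) / 20 := by
      have hcc : ∀ j ∈ Finset.Icc 1 E, c j = 1/20 := fun j hj => by
        simp [hcdef, (Finset.mem_Icc.mp hj).2]
      rw [Finset.sum_congr rfl hcc, Finset.sum_const, Nat.card_Icc]
      simp only [Nat.add_sub_cancel, nsmul_eq_mul]
      ring
    have h2 : ∑ j ∈ Finset.Icc (E+1) F, c j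
        = η/20 * ∑ j ∈ Finset.Icc (E+1) F, (1:ℝ)/(j:ℝ)^3 := by
      rw [Finset.mul_sum]
      apply Finset.sum_congr rfl
      intro j hj
      have hj1 := (Finset.mem_Icc.mp hj).1
      have : ¬ (j ≤ E) := by omega
      simp only [hcdef, this, if_false]
      field_simp
    have htel : ∑ j ∈ Finset.Icc (E+1) F, (1:ℝ)/(j:ℝ)^3 ≤ 1/(2*E*(E+1)) := by
      have := tele_sum E hE1 F hEF
      have hpos2 : (0:ℝ) ≤ 1/(2*(F:ℝ)*((F:ℝ)+1)) := by positivity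
      linarith
    have hE1r : (1:ℝ) ≤ (E:ℝ) := by exact_mod_cast hE1
    have hηlt : η < ((E:ℝ)+1)^3 := by
      calc η = (η ^ ((1:ℝ)/3)) ^ (3:ℕ) := hcube
        _ < ((E:ℝ)+1)^(3:ℕ) := by
            apply pow_lt_pow_left₀ hElt (by positivity)
            norm_num
        _ = ((E:ℝ)+1)^3 := by norm_num
    have hsecond : η/20 * (1/(2*(E:ℝ)*((E:ℝ)+1))) ≤ 2/20 * η ^ ((1:ℝ)/3) := by
      have hLHS : η/20 * (1/(2*(E:ℝ)*((E:ℝ)+1))) = η / (20*(2*(E:ℝ)*((E:ℝ)+1))) := by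
        rw [div_mul_div_comm, mul_one]
      rw [hLHS, div_le_iff₀ (by positivity)]
      have hh1 : ((E:ℝ)+1)^3 ≤ 4*(E:ℝ)^2*((E:ℝ)+1) := by
        have hp := mul_nonneg (sub_nonneg.mpr hE1r)
          (by positivity : (0:ℝ) ≤ 3*(E:ℝ)^2+4*(E:ℝ)+1)
        nlinarith [hp]
      have hh2 : 4*(E:ℝ)^2*((E:ℝ)+1) ≤ 4*η^((1:ℝ)/3)*((E:ℝ)*((E:ℝ)+1)) := by
        have hp := mul_le_mul_of_nonneg_right hEle
          (by positivity : (0:ℝ) ≤ 4*(E:ℝ)*((E:ℝ)+1))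
        nlinarith [hp]
      linarith [hηlt, hh1, hh2]
    have hfirst : (E:ℝ)/20 ≤ 1/20 * η ^ ((1:ℝ)/3) := by linarith
    have hsum2 : η/20 * ∑ j ∈ Finset.Icc (E+1) F, (1:ℝ)/(j:ℝ)^3
        ≤ η/20 * (1/(2*(E:ℝ)*((E:ℝ)+1))) :=
      mul_le_mul_of_nonneg_left htel (by positivity)
    rw [hsplit, h1, h2]
    linarith
  -- conclude
  have hfinal : 1 / Λ.L 0 η ≤ Real.exp (π * ∑ j ∈ Finset.Icc 1 F, c j) := by
    rw [div_le_iff₀ (Λ.pos 0 η)]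
    linarith [hmain]
  calc 1 / Λ.L 0 η ≤ Real.exp (π * ∑ j ∈ Finset.Icc 1 F, c j) := hfinal
    _ ≤ Real.exp (3 * π / 20 * η ^ ((1:ℝ)/3)) := by
        apply Real.exp_le_exp.2
        have := mul_le_mul_of_nonneg_left hsum Real.pi_pos.le
        linarith [this]

/-- For `|η| > 1` and `t ≥ 0`, `1 ≤ 1/Λ(t,η) ≤ e^{(3π/20)|η|^{1/3}}`. -/
theorem stmt_14 (Λ : LambdaData) :
    ∀ η : ℝ, 1 < |η| → ∀ t : ℝ, 0 ≤ t →
      1 ≤ 1 / Λ.L t η ∧ 1 / Λ.L t η ≤ Real.exp (3 * π / 20 * |η| ^ ((1:ℝ)/3)) := by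
  intro η hη t ht
  set μ := |η| with hμdef
  have hμ : 1 < μ := hη
  have hLeq : ∀ s : ℝ, Λ.L s η = Λ.L s μ := by
    intro s
    rcases abs_cases η with ⟨h1, _⟩ | ⟨h1, h2⟩
    · rw [hμdef, h1]
    · rw [hμdef, h1, Λ.symm]
  have hpos := Λ.pos t μ
  have hle1 : Λ.L t μ ≤ 1 := by
    rcases le_total t (2*μ) with h | h
    · have := Λ.mono μ hμ h
      simpa [Λ.one_late μ hμ (2*μ) le_rfl] using this
    · exact (Λ.one_late μ hμ t h).le
  constructor
  · rw [hLeq t]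
    exact one_le_one_div hpos hle1
  · rw [hLeq t]
    have h0t : Λ.L 0 μ ≤ Λ.L t μ := Λ.mono μ hμ ht
    calc 1 / Λ.L t μ ≤ 1 / Λ.L 0 μ := one_div_le_one_div_of_le (Λ.pos 0 μ) h0t
      _ ≤ Real.exp (3 * π / 20 * μ ^ ((1:ℝ)/3)) := main_pos Λ μ hμ
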